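/- Let D > 0, l > 0, α ∈ ℝ with α ≠ 0, and let z > 0 satisfy tan(lz/(2D)) = z/α. Define φ(x) = e^{(α/(2D))x} ( cos((z/(2D))x) − (α/z) sin((z/(2D))x) ). Then φ satisfies −D φ''(x) + α φ'(x) = ((α² + z²)/(4D)) φ(x) for all x ∈ ℝ, φ'(0) = 0, and φ(l) = 0. Moreover, if in addition α > 0 and z < πD/l, then φ(x) > 0 for all x ∈ [0, l). -/

import Mathlib

theorem stmt_10 (D l α z : ℝ) (φ : ℝ → ℝ)
    (hD : 0 < D) (hl : 0 < l) (hα : α ≠ 0) (hz : 0 < z)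
    (htan : Real.tan (l * z / (2 * D)) = z / α)
    (hφ : ∀ x, φ x = Real.exp (α / (2 * D) * x) *
      (Real.cos (z / (2 * D) * x) - α / z * Real.sin (z / (2 * D) * x))) :
    (∀ x : ℝ, -D * deriv (deriv φ) x + α * deriv φ x
        = (α ^ 2 + z ^ 2) / (4 * D) * φ x) ∧
    deriv φ 0 = 0 ∧ φ l = 0 ∧
    (0 < α → z < Real.pi * D / l → ∀ x ∈ Set.Ico (0:ℝ) l, 0 < φ x) := by
  have hD' : D ≠ 0 := ne_of_gt hD
  have hz' : z ≠ 0 := ne_of_gt hz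
  set c : ℝ := (α ^ 2 + z ^ 2) / (2 * D * z) with hc
  have hφf : φ = fun x => Real.exp (α / (2 * D) * x) *
      (Real.cos (z / (2 * D) * x) - α / z * Real.sin (z / (2 * D) * x)) := funext hφ
  -- first derivative
  have h1 : ∀ x : ℝ, HasDerivAt φ
      (-(c * (Real.exp (α / (2 * D) * x) * Real.sin (z / (2 * D) * x)))) x := by
    intro x
    rw [hφf]
    have he : HasDerivAt (fun x : ℝ => Real.exp (α / (2 * D) * x))
        (Real.exp (α / (2 * D) * x) * (α / (2 * D))) x := by
      simpa using ((hasDerivAt_id x).const_mul (α / (2 * D))).exp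
    have hcos : HasDerivAt (fun x : ℝ => Real.cos (z / (2 * D) * x))
        (-Real.sin (z / (2 * D) * x) * (z / (2 * D))) x := by
      simpa using ((hasDerivAt_id x).const_mul (z / (2 * D))).cos
    have hsin : HasDerivAt (fun x : ℝ => α / z * Real.sin (z / (2 * D) * x))
        (α / z * (Real.cos (z / (2 * D) * x) * (z / (2 * D)))) x := by
      simpa [mul_assoc] using
        (((hasDerivAt_id x).const_mul (z / (2 * D))).sin).const_mul (α / z)
    have key := he.mul (hcos.sub hsin)
    convert key using 1 <;> try rfl
    rw [hc]
    simp only [Pi.sub_apply]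
    field_simp
    ring
  have hderiv1 : deriv φ = fun x =>
      -(c * (Real.exp (α / (2 * D) * x) * Real.sin (z / (2 * D) * x))) :=
    funext fun x => (h1 x).deriv
  -- second derivative
  have h2 : ∀ x : ℝ, HasDerivAt (deriv φ)
      (-(c * (Real.exp (α / (2 * D) * x) *
        (Real.sin (z / (2 * D) * x) * (α / (2 * D)) +
         Real.cos (z / (2 * D) * x) * (z / (2 * D)))))) x := by
    intro x
    rw [hderiv1]
    have he : HasDerivAt (fun x : ℝ => Real.exp (α / (2 * D) * x))
        (Real.exp (α / (2 * D) * x) * (α / (2 * D))) x := by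
      simpa using ((hasDerivAt_id x).const_mul (α / (2 * D))).exp
    have hsin : HasDerivAt (fun x : ℝ => Real.sin (z / (2 * D) * x))
        (Real.cos (z / (2 * D) * x) * (z / (2 * D))) x := by
      simpa using ((hasDerivAt_id x).const_mul (z / (2 * D))).sin
    have key := ((he.mul hsin).const_mul c).neg
    convert key using 1 <;> try rfl
    ring
  have hderiv2 : deriv (deriv φ) = fun x =>
      -(c * (Real.exp (α / (2 * D) * x) *
        (Real.sin (z / (2 * D) * x) * (α / (2 * D)) +
         Real.cos (z / (2 * D) * x) * (z / (2 * D))))) :=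
    funext fun x => (h2 x).deriv
  -- boundary facts
  have hcosl : Real.cos (z / (2 * D) * l) ≠ 0 := by
    intro h
    have h0 : Real.tan (l * z / (2 * D)) = 0 := by
      rw [Real.tan_eq_sin_div_cos, show l * z / (2 * D) = z / (2 * D) * l by ring, h,
        div_zero]
    rw [htan] at h0
    rcases div_eq_zero_iff.mp h0 with h' | h'
    · exact hz' h'
    · exact hα h'
  have hsinl : Real.sin (z / (2 * D) * l) * α = z * Real.cos (z / (2 * D) * l) := by
    have h' := htan
    rw [Real.tan_eq_sin_div_cos, show l * z / (2 * D) = z / (2 * D) * l by ring] at h'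
    exact (div_eq_div_iff hcosl hα).mp h'
  refine ⟨?_, ?_, ?_, ?_⟩
  · intro x
    rw [hderiv2, hderiv1, hφ x]
    simp only
    rw [hc]
    field_simp
    ring
  · rw [hderiv1]
    simp
  · rw [hφ l]
    have hkey : Real.cos (z / (2 * D) * l) - α / z * Real.sin (z / (2 * D) * l) = 0 := by
      have h9 : α / z * Real.sin (z / (2 * D) * l) = Real.cos (z / (2 * D) * l) := by
        rw [div_mul_eq_mul_div, div_eq_iff hz']
        linarith
      rw [h9, sub_self]
    rw [hkey, mul_zero]
  · intro hα0 hzl x hx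
    obtain ⟨hx0, hxl⟩ := hx
    rw [hφ x]
    have hb : 0 < z / (2 * D) := by positivity
    have hbx0 : 0 ≤ z / (2 * D) * x := by positivity
    have hbl : z / (2 * D) * l < Real.pi / 2 := by
      rw [div_mul_eq_mul_div, div_lt_div_iff₀ (by positivity) (by norm_num)]
      have h' : z * l < Real.pi * D / l * l := mul_lt_mul_of_pos_right hzl hl
      rw [div_mul_cancel₀ _ (ne_of_gt hl)] at h'
      linarith
    have hbx : z / (2 * D) * x < z / (2 * D) * l := mul_lt_mul_of_pos_left hxl hb
    have hcosx : 0 < Real.cos (z / (2 * D) * x) := by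
      apply Real.cos_pos_of_mem_Ioo
      constructor <;> [linarith [Real.pi_pos]; linarith]
    have htanlt : Real.tan (z / (2 * D) * x) < Real.tan (z / (2 * D) * l) := by
      apply Real.tan_lt_tan_of_lt_of_lt_pi_div_two _ hbl hbx
      linarith [Real.pi_pos]
    rw [show l * z / (2 * D) = z / (2 * D) * l by ring] at htan
    rw [htan] at htanlt
    have key : α / z * Real.sin (z / (2 * D) * x) < Real.cos (z / (2 * D) * x) := by
      have h1' : Real.sin (z / (2 * D) * x) = Real.tan (z / (2 * D) * x) *
          Real.cos (z / (2 * D) * x) := by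
        rw [Real.tan_eq_sin_div_cos, div_mul_cancel₀ _ (ne_of_gt hcosx)]
      rw [h1']
      have h2 : α / z * Real.tan (z / (2 * D) * x) < 1 := by
        calc α / z * Real.tan (z / (2 * D) * x) < α / z * (z / α) :=
              mul_lt_mul_of_pos_left htanlt (by positivity)
          _ = 1 := by field_simp
      have h3 := mul_lt_mul_of_pos_right h2 hcosx
      rw [one_mul] at h3
      rw [← mul_assoc]
      linarith
    have hpos : 0 < Real.cos (z / (2 * D) * x) - α / z * Real.sin (z / (2 * D) * x) := by
      linarith
    positivity
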